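/- Let X be an f-Banach asymmetric normed space, K ⊆ X nonempty, convex, f-closed and f-bounded, with f-convergence implying b-convergence. If T : K → K is f-non-expansive and (T − I)(K) is f-closed in X, then T has a fixed point in K. -/

import Mathlib

open Filter Topology

/-- in an f-Banach asymmetric normed space where f-convergence
implies b-convergence, an f-non-expansive self-map T of a nonempty convex
f-closed f-bounded set K with (T−I)(K) f-closed has a fixed point. -/
theorem fixedPoint_of_TminusI_closed {X : Type*} [AddCommGroup X] [Module ℝ X]
    (n : X → ℝ)
    (h_nonneg : ∀ x, 0 ≤ n x)
    (h_eq : ∀ x, (n x = 0 ∧ n (-x) = 0) ↔ x = 0)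
    (h_hom : ∀ (l : ℝ), 0 ≤ l → ∀ x, n (l • x) = l * n x)
    (h_sub : ∀ x y, n (x + y) ≤ n x + n y)
    (tf : TopologicalSpace X)
    (htf : tf = TopologicalSpace.generateFrom
      {s : Set X | ∃ x r, s = {u | n (u - x) < r}})
    (h_complete : ∀ u : ℕ → X,
      (∀ ε > 0, ∃ N, ∀ m k, N ≤ k → k ≤ m → n (u m - u k) < ε) →
      ∃ x, Tendsto (fun k => n (u k - x)) atTop (𝓝 0))
    (h_fb : ∀ (u : ℕ → X) (x : X),
      Tendsto (fun k => n (u k - x)) atTop (𝓝 0) →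
      Tendsto (fun k => n (x - u k)) atTop (𝓝 0))
    (K : Set X) (hK_ne : K.Nonempty) (hK_conv : Convex ℝ K)
    (hK_closed : @IsClosed X tf K)
    (hK_bdd : ∃ x r, K ⊆ {u | n (u - x) < r})
    (T : X → X) (hT_maps : Set.MapsTo T K K)
    (hT_nonexp : ∀ x ∈ K, ∀ y ∈ K, n (T y - T x) ≤ n (y - x))
    (h_TI_closed : @IsClosed X tf ((fun x => T x - x) '' K)) :
    ∃ x ∈ K, T x = x := by
  subst htf
  obtain ⟨x₀, hx₀⟩ := hK_ne
  obtain ⟨c, r, hKb⟩ := hK_bdd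
  set M : ℝ := r + n (c - x₀) with hM_def
  have hball : ∀ x ∈ K, n (x - x₀) < M := by
    intro x hx
    have h1 : n (x - c) < r := hKb hx
    have h2 : n ((x - c) + (c - x₀)) ≤ n (x - c) + n (c - x₀) := h_sub _ _
    rw [sub_add_sub_cancel] at h2
    linarith
  have hM_pos : 0 < M := lt_of_le_of_lt (h_nonneg _) (hball x₀ hx₀)
  -- approximate fixed points
  have key : ∀ ε > (0:ℝ), ∃ x ∈ K, n (T x - x) < ε := by
    intro ε hε
    set t : ℝ := max (1/2) (1 - ε / (2 * M)) with ht_def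
    have ht0 : (0:ℝ) ≤ t := le_trans (by norm_num) (le_max_left _ _)
    have ht1 : t < 1 := by
      apply max_lt (by norm_num)
      have : 0 < ε / (2 * M) := by positivity
      linarith
    have h1t : 0 ≤ 1 - t := by linarith
    have hεt : (1 - t) * M ≤ ε / 2 := by
      have h3 : 1 - ε / (2 * M) ≤ t := le_max_right _ _
      have h4 : 1 - t ≤ ε / (2 * M) := by linarith
      have h5 : (1 - t) * M ≤ (ε / (2 * M)) * M :=
        mul_le_mul_of_nonneg_right h4 hM_pos.le
      have h6 : (ε / (2 * M)) * M = ε / 2 := by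
        field_simp
      linarith
    set S : X → X := fun x => (1 - t) • x₀ + t • T x with hS_def
    have hSK : ∀ x ∈ K, S x ∈ K := fun x hx =>
      hK_conv hx₀ (hT_maps hx) h1t ht0 (by ring)
    have hS_contr : ∀ x ∈ K, ∀ y ∈ K, n (S y - S x) ≤ t * n (y - x) := by
      intro x hx y hy
      have h1 : S y - S x = t • (T y - T x) := by simp [hS_def]; module
      rw [h1, h_hom t ht0]
      exact mul_le_mul_of_nonneg_left (hT_nonexp x hx y hy) ht0
    set u : ℕ → X := fun k => S^[k] x₀ with hu_def
    have hu_succ : ∀ k, u (k + 1) = S (u k) := by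
      intro k
      simp [hu_def, Function.iterate_succ_apply']
    have huK : ∀ k, u k ∈ K := by
      intro k
      induction k with
      | zero => simpa [hu_def] using hx₀
      | succ k ih => rw [hu_succ]; exact hSK _ ih
    have hstep : ∀ k, n (u (k + 1) - u k) ≤ t ^ k * M := by
      intro k
      induction k with
      | zero =>
        simpa [hu_def] using (hball _ (huK 1)).le
      | succ k ih =>
        have h7 : n (S (u (k + 1)) - S (u k)) ≤ t * n (u (k + 1) - u k) :=
          hS_contr _ (huK k) _ (huK (k + 1))
        rw [← hu_succ k, ← hu_succ (k + 1)] at h7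
        calc n (u (k + 1 + 1) - u (k + 1)) ≤ t * n (u (k + 1) - u k) := h7
          _ ≤ t * (t ^ k * M) := mul_le_mul_of_nonneg_left ih ht0
          _ = t ^ (k + 1) * M := by ring
    obtain ⟨k, hk⟩ := exists_pow_lt_of_lt_one (show (0:ℝ) < ε / (2 * M) by positivity) ht1
    refine ⟨u k, huK k, ?_⟩
    have h1 : n (T (u k) - S (u k)) ≤ (1 - t) * M := by
      have heq : T (u k) - S (u k) = (1 - t) • (T (u k) - x₀) := by
        simp [hS_def]; module
      rw [heq, h_hom _ h1t]
      exact mul_le_mul_of_nonneg_left (hball _ (hT_maps (huK k))).le h1t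
    have h2 : n (S (u k) - u k) ≤ t ^ k * M := by
      rw [← hu_succ k]; exact hstep k
    have h3 : n ((T (u k) - S (u k)) + (S (u k) - u k)) ≤
        n (T (u k) - S (u k)) + n (S (u k) - u k) := h_sub _ _
    rw [sub_add_sub_cancel] at h3
    have h4 : t ^ k * M < ε / 2 := by
      have h5 := mul_lt_mul_of_pos_right hk hM_pos
      have h6 : (ε / (2 * M)) * M = ε / 2 := by field_simp
      linarith
    have h7 : (1 - t) * M + t ^ k * M < ε := by
      calc (1 - t) * M + t ^ k * M < ε / 2 + ε / 2 := add_lt_add_of_le_of_lt hεt h4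
        _ = ε := by ring
    have h8 : n (T (u k) - S (u k)) + n (S (u k) - u k) ≤ (1 - t) * M + t ^ k * M :=
      add_le_add h1 h2
    exact lt_of_le_of_lt (le_trans h3 h8) h7
  -- choose a sequence of approximate fixed points
  have hz : ∀ j : ℕ, ∃ x ∈ K, n (T x - x) < 1 / (j + 1) := by
    intro j
    exact key _ (by positivity)
  choose z hzK hzn using hz
  -- the sequence T z j - z j tends to 0 in the forward topology
  letI : TopologicalSpace X := TopologicalSpace.generateFrom
      {s : Set X | ∃ x r, s = {u | n (u - x) < r}}
  have htend : Tendsto (fun j => T (z j) - z j) atTop (𝓝 (0 : X)) := by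
    rw [TopologicalSpace.tendsto_nhds_generateFrom_iff]
    rintro s ⟨x, ρ, rfl⟩ h0
    have h0' : n (0 - x) < ρ := h0
    have hδ : 0 < ρ - n (0 - x) := by linarith
    have hlim : Tendsto (fun j : ℕ => 1 / ((j : ℝ) + 1)) atTop (𝓝 0) :=
      tendsto_one_div_add_atTop_nhds_zero_nat
    have hev : ∀ᶠ j : ℕ in atTop, (1 : ℝ) / ((j : ℝ) + 1) < ρ - n (0 - x) :=
      hlim.eventually (eventually_lt_nhds hδ)
    filter_upwards [hev] with j hj
    have h1 : n (T (z j) - z j) < ρ - n (0 - x) := lt_trans (hzn j) hj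
    have h2 : n ((T (z j) - z j) + (0 - x)) ≤
        n (T (z j) - z j) + n (0 - x) := h_sub _ _
    have h3 : (T (z j) - z j) + (0 - x) = (T (z j) - z j) - x := by abel
    rw [h3] at h2
    show n ((T (z j) - z j) - x) < ρ
    linarith
  have hmem : (0 : X) ∈ (fun x => T x - x) '' K := by
    refine h_TI_closed.mem_of_tendsto htend ?_
    filter_upwards with j using ⟨z j, hzK j, rfl⟩
  obtain ⟨x, hxK, hx⟩ := hmem
  exact ⟨x, hxK, by simpa [sub_eq_zero] using hx⟩
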